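/- There exists a compactly supported Borel probability measure $\mu$ on $\mathbb{R}^2$ with $\dim_H\mu>0$ such that for every line $V\subset\mathbb{R}^2$ through the origin, the orthogonal projection $P_V:\mathbb{R}^2\to V$ is injective on some Borel set of full $\mu$-measure. -/

import Mathlib

open MeasureTheory Metric Set
open scoped NNReal ENNReal

noncomputable section
namespace ASInj
open Filter Topology

/-- base probability measure: Lebesgue on [0,1) -/
def mu0 : Measure ℝ := volume.restrict (Ico (0:ℝ) 1)

instance : IsProbabilityMeasure mu0 :=
  ⟨by simp [mu0, Real.volume_Ico]⟩

/-- k-th base-4 digit -/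
def dg (k : ℕ) (u : ℝ) : ℤ := ⌊u * 4 ^ (k+1)⌋ % 4

/-- digit-is-zero event (probability 1/4) -/
def db (k : ℕ) (u : ℝ) : Bool := decide (dg k u = 0)

def tau (u : ℝ) : ℝ := Int.fract (u * 4)

lemma measurable_dg (k : ℕ) : Measurable (dg k) := by
  have h : Measurable fun u : ℝ => ⌊u * 4 ^ (k+1)⌋ := (measurable_id.mul_const _).floor
  exact (measurable_from_top (f := fun z : ℤ => z % 4)).comp h

lemma measurable_db (k : ℕ) : Measurable (db k) :=
  (measurable_from_top (f := fun z : ℤ => decide (z = 0))).comp (measurable_dg k)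

lemma measurable_tau : Measurable tau :=
  (measurable_id.mul_const _).fract

lemma dg_nonneg (k : ℕ) (u : ℝ) : 0 ≤ dg k u := Int.emod_nonneg _ (by norm_num)

lemma dg_lt (k : ℕ) (u : ℝ) : dg k u < 4 := Int.emod_lt_of_pos _ (by norm_num)

lemma dg_shift (k : ℕ) (u : ℝ) : dg (k+1) u = dg k (tau u) := by
  have h1 : tau u * 4 ^ (k+1) = u * 4 ^ (k+2) - ((⌊u * 4⌋ * 4 ^ (k+1) : ℤ) : ℝ) := by
    simp only [tau, Int.fract]
    push_cast
    ring
  have h2 : ⌊tau u * 4 ^ (k+1)⌋ = ⌊u * 4 ^ (k+2)⌋ - ⌊u * 4⌋ * 4 ^ (k+1) := by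
    rw [h1, Int.floor_sub_intCast]
  unfold dg
  rw [show k+1+1 = k+2 from rfl, h2]
  generalize ⌊u * 4 ^ (k+2)⌋ = a
  generalize hb : ⌊u * 4⌋ = b
  have h3 : b * 4^(k+1) = 4 * (b * 4^k) := by ring
  rw [h3]
  generalize b * 4^k = c
  omega

lemma db_shift (k : ℕ) (u : ℝ) : db (k+1) u = db k (tau u) := by
  rw [db, db, dg_shift]

lemma tau_mem (u : ℝ) : tau u ∈ Ico (0:ℝ) 1 := ⟨Int.fract_nonneg _, Int.fract_lt_one _⟩

lemma tau_iter_mem {u : ℝ} (hu : u ∈ Ico (0:ℝ) 1) (n : ℕ) : tau^[n] u ∈ Ico (0:ℝ) 1 := by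
  induction n generalizing u with
  | zero => exact hu
  | succ n ih => rw [Function.iterate_succ_apply]; exact ih (tau_mem u)

open Classical in
/-- weight of a Bool-set of digits -/
def q (S : Set Bool) : ℝ≥0∞ :=
  (if true ∈ S then (4:ℝ≥0∞)⁻¹ else 0) + (if false ∈ S then 3 * (4:ℝ≥0∞)⁻¹ else 0)

lemma q_univ : q univ = 1 := by
  rw [q, if_pos (mem_univ _), if_pos (mem_univ _)]
  rw [show (4:ℝ≥0∞)⁻¹ + 3 * 4⁻¹ = 4 * 4⁻¹ by ring]
  exact ENNReal.mul_inv_cancel (by norm_num) (by norm_num)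

lemma q_singleton_le (b : Bool) : q {b} ≤ 3 * (4:ℝ≥0∞)⁻¹ := by
  classical
  have h1 : (1:ℝ≥0∞) * 4⁻¹ ≤ 3 * 4⁻¹ := mul_le_mul_left (by norm_num) _
  cases b <;> simp [q] <;> simpa using h1

/-- base case of the master formula -/
lemma base (S : Set Bool) (A : Set ℝ) (hA : MeasurableSet A) (hA1 : A ⊆ Ico 0 1) :
    volume {u | u ∈ Ico (0:ℝ) 1 ∧ db 0 u ∈ S ∧ tau u ∈ A} = q S * volume A := by
  classical
  set E : ℕ → Set ℝ := fun r => (fun u : ℝ => u * 4 - r) ⁻¹' A with hE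
  have hEmeas : ∀ r : ℕ, MeasurableSet (E r) :=
    fun r => hA.preimage ((measurable_id.mul_const _).sub_const _)
  have key : ∀ (r : ℕ), r < 4 → ∀ u : ℝ, u ∈ E r →
      u ∈ Ico (0:ℝ) 1 ∧ ⌊u * 4⌋ = (r:ℤ) ∧ tau u = u * 4 - r := by
    intro r hr u hu
    have h1 : u * 4 - r ∈ Ico (0:ℝ) 1 := hA1 hu
    obtain ⟨h1a, h1b⟩ := h1
    have hr0 : (0:ℝ) ≤ r := Nat.cast_nonneg r
    have hu1 : (r:ℝ) ≤ u * 4 := by linarith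
    have hu2 : u * 4 < r + 1 := by linarith
    have hfl : ⌊u * 4⌋ = (r:ℤ) := by
      rw [Int.floor_eq_iff]
      constructor
      · exact_mod_cast hu1
      · push_cast; linarith
    refine ⟨⟨by linarith, ?_⟩, hfl, ?_⟩
    · have : (r:ℝ) ≤ 3 := by exact_mod_cast Nat.lt_succ_iff.mp hr
      linarith
    · rw [tau, Int.fract, hfl]; push_cast; ring
  have hdg0 : ∀ u : ℝ, dg 0 u = ⌊u * 4⌋ % 4 := by
    intro u; rw [dg]; norm_num
  have seteq : {u | u ∈ Ico (0:ℝ) 1 ∧ db 0 u ∈ S ∧ tau u ∈ A}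
      = ⋃ r ∈ Finset.range 4, (if (decide ((r:ℤ) = 0)) ∈ S then E r else ∅) := by
    ext u
    simp only [Set.mem_iUnion, Finset.mem_range, mem_setOf_eq]
    constructor
    · rintro ⟨hu, hS, htau⟩
      have h0 : (0:ℤ) ≤ ⌊u * 4⌋ := Int.floor_nonneg.2 (by nlinarith [hu.1])
      have h4 : ⌊u * 4⌋ < 4 := by
        have : u * 4 < 4 := by nlinarith [hu.2]
        exact Int.floor_lt.2 (by exact_mod_cast this)
      refine ⟨⌊u * 4⌋.toNat, by omega, ?_⟩
      have hcast : ((⌊u * 4⌋.toNat : ℤ)) = ⌊u * 4⌋ := Int.toNat_of_nonneg h0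
      have hdb : db 0 u = decide ((⌊u * 4⌋.toNat : ℤ) = 0) := by
        rw [db, hdg0, hcast]
        congr 1
        simp only [eq_iff_iff]
        omega
      rw [if_pos (by rw [← hdb]; exact hS)]
      have : tau u = u * 4 - (⌊u * 4⌋.toNat : ℝ) := by
        rw [tau, Int.fract]
        congr 1
        exact_mod_cast hcast.symm
      show u * 4 - _ ∈ A
      rw [← this]; exact htau
    · rintro ⟨r, hr, hu⟩
      by_cases hrS : (decide ((r:ℤ) = 0)) ∈ S
      · rw [if_pos hrS] at hu
        obtain ⟨hu1, hfl, htau⟩ := key r hr u hu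
        refine ⟨hu1, ?_, by rw [htau]; exact hu⟩
        have : db 0 u = decide ((r:ℤ) = 0) := by
          rw [db, hdg0, hfl]
          congr 1
          simp only [eq_iff_iff]
          omega
        rw [this]; exact hrS
      · rw [if_neg hrS] at hu; exact absurd hu (notMem_empty u)
  have hdisj : (↑(Finset.range 4) : Set ℕ).PairwiseDisjoint
      (fun r => (if (decide ((r:ℤ) = 0)) ∈ S then E r else ∅)) := by
    intro r hr r' hr' hne
    simp only [Finset.coe_range, mem_Iio] at hr hr'
    apply Set.disjoint_left.2
    intro u hu hu'
    simp only at hu hu'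
    split_ifs at hu hu' with h1 h2
    · have e1 := (key r hr u hu).2.1
      have e2 := (key r' hr' u hu').2.1
      exact hne (by exact_mod_cast e1.symm.trans e2)
    all_goals first
      | exact absurd hu (notMem_empty u)
      | exact absurd hu' (notMem_empty u)
  have hvolE : ∀ r : ℕ, volume (E r) = 4⁻¹ * volume A := by
    intro r
    have hcomp : E r = (fun u : ℝ => u * 4) ⁻¹' ((fun x : ℝ => x + (-(r:ℝ))) ⁻¹' A) := by
      ext u; simp [hE, sub_eq_add_neg]
    rw [hcomp, Real.volume_preimage_mul_right (by norm_num : (4:ℝ) ≠ 0),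
      measure_preimage_add_right]
    have h14 : ENNReal.ofReal |(4:ℝ)⁻¹| = (4:ℝ≥0∞)⁻¹ := by
      rw [show |(4:ℝ)⁻¹| = (4:ℝ)⁻¹ by norm_num, ENNReal.ofReal_inv_of_pos (by norm_num)]
      norm_num
    rw [h14]
  rw [seteq, measure_biUnion_finset hdisj (fun r _ => by
    split_ifs
    exacts [hEmeas r, MeasurableSet.empty])]
  have hterm : ∀ r : ℕ, volume (if (decide ((r:ℤ) = 0)) ∈ S then E r else ∅)
      = if (decide ((r:ℤ) = 0)) ∈ S then 4⁻¹ * volume A else 0 := by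
    intro r
    split_ifs
    · exact hvolE r
    · exact measure_empty
  rw [Finset.sum_congr rfl (fun r _ => hterm r)]
  rw [Finset.sum_range_succ, Finset.sum_range_succ, Finset.sum_range_succ,
    Finset.sum_range_succ, Finset.sum_range_zero]
  norm_num
  by_cases h1 : true ∈ S <;> by_cases h2 : false ∈ S <;>
    simp [q, h1, h2] <;> ring

/-- master product formula -/
lemma master : ∀ (n : ℕ) (S : ℕ → Set Bool) (A : Set ℝ), MeasurableSet A → A ⊆ Ico 0 1 →
    volume {u | u ∈ Ico (0:ℝ) 1 ∧ (∀ k < n, db k u ∈ S k) ∧ tau^[n] u ∈ A}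
      = (∏ k ∈ Finset.range n, q (S k)) * volume A := by
  intro n
  induction n with
  | zero =>
    intro S A hA hA1
    have : {u | u ∈ Ico (0:ℝ) 1 ∧ (∀ k < 0, db k u ∈ S k) ∧ tau^[0] u ∈ A} = A := by
      ext u
      simp only [mem_setOf_eq, Function.iterate_zero, id_eq]
      constructor
      · rintro ⟨_, _, h⟩; exact h
      · intro h; exact ⟨hA1 h, fun k hk => absurd hk (Nat.not_lt_zero k), h⟩
    rw [this]; simp
  | succ n ih =>
    intro S A hA hA1
    set A' : Set ℝ := {v | v ∈ Ico (0:ℝ) 1 ∧ (∀ k < n, db k v ∈ S (k+1)) ∧ tau^[n] v ∈ A}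
      with hA'
    have hA'meas : MeasurableSet A' := by
      have h1 : A' = Ico (0:ℝ) 1 ∩ ((⋂ k ∈ Finset.range n, db k ⁻¹' (S (k+1)))
          ∩ (tau^[n]) ⁻¹' A) := by
        ext v
        simp only [hA', mem_setOf_eq, mem_inter_iff, Set.mem_iInter, Finset.mem_range,
          mem_preimage]
      rw [h1]
      exact measurableSet_Ico.inter ((MeasurableSet.biInter (Finset.range n).countable_toSet
        (fun k _ => (measurable_db k) (by trivial))).inter
        (hA.preimage (measurable_tau.iterate n)))
    have hA'sub : A' ⊆ Ico 0 1 := fun v hv => hv.1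
    have seteq : {u | u ∈ Ico (0:ℝ) 1 ∧ (∀ k < n+1, db k u ∈ S k) ∧ tau^[n+1] u ∈ A}
        = {u | u ∈ Ico (0:ℝ) 1 ∧ db 0 u ∈ S 0 ∧ tau u ∈ A'} := by
      ext u
      simp only [mem_setOf_eq, hA']
      constructor
      · rintro ⟨hu, hd, ht⟩
        refine ⟨hu, hd 0 (Nat.succ_pos n), tau_mem u, fun k hk => ?_, ?_⟩
        · have := hd (k+1) (by omega)
          rwa [db_shift] at this
        · rwa [Function.iterate_succ_apply] at ht
      · rintro ⟨hu, hd0, _, hd, ht⟩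
        refine ⟨hu, fun k hk => ?_, ?_⟩
        · match k with
          | 0 => exact hd0
          | (k+1) =>
            have := hd k (by omega)
            rwa [← db_shift] at this
        · rwa [Function.iterate_succ_apply]
    rw [seteq, base (S 0) A' hA'meas hA'sub, ih (fun k => S (k+1)) A hA hA1,
      Finset.prod_range_succ']
    ring

/-- cylinder measure -/
lemma masterCyl (n : ℕ) (S : ℕ → Set Bool) :
    mu0 {u | ∀ k < n, db k u ∈ S k} = ∏ k ∈ Finset.range n, q (S k) := by
  have hmeas : MeasurableSet {u : ℝ | ∀ k < n, db k u ∈ S k} := by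
    have h1 : {u : ℝ | ∀ k < n, db k u ∈ S k} = ⋂ k ∈ Finset.range n, db k ⁻¹' (S k) := by
      ext u
      simp only [mem_setOf_eq, Set.mem_iInter, Finset.mem_range, mem_preimage]
    rw [h1]
    exact MeasurableSet.biInter (Finset.range n).countable_toSet
      (fun k _ => (measurable_db k) (by trivial))
  rw [mu0, Measure.restrict_apply hmeas]
  have h2 : {u : ℝ | ∀ k < n, db k u ∈ S k} ∩ Ico 0 1
      = {u | u ∈ Ico (0:ℝ) 1 ∧ (∀ k < n, db k u ∈ S k) ∧ tau^[n] u ∈ Ico (0:ℝ) 1} := by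
    ext u
    simp only [mem_inter_iff, mem_setOf_eq]
    constructor
    · rintro ⟨h, hu⟩; exact ⟨hu, h, tau_iter_mem hu n⟩
    · rintro ⟨hu, h, _⟩; exact ⟨h, hu⟩
  rw [h2, master n S (Ico 0 1) measurableSet_Ico (fun x h => h)]
  simp [Real.volume_Ico]

/-- finite-intersection product formula along an injective index map -/
lemma masterFin (σ : ℕ → ℕ) (hσ : Function.Injective σ) (F : Finset ℕ) (B : ℕ → Set Bool) :
    mu0 (⋂ i ∈ F, db (σ i) ⁻¹' B i) = ∏ i ∈ F, q (B i) := by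
  classical
  set n := F.sup σ + 1 with hn
  set S : ℕ → Set Bool := fun k => ⋂ i ∈ F.filter (fun i => σ i = k), B i with hS
  have hσlt : ∀ i ∈ F, σ i < n := fun i hi => Nat.lt_succ_of_le (Finset.le_sup hi)
  have seteq : (⋂ i ∈ F, db (σ i) ⁻¹' B i) = {u | ∀ k < n, db k u ∈ S k} := by
    ext u
    simp only [Set.mem_iInter, mem_preimage, mem_setOf_eq, hS, Finset.mem_filter]
    constructor
    · intro h k _
      try simp only [Set.mem_iInter, Finset.mem_filter]
      rintro i ⟨hi, rfl⟩
      exact h i hi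
    · intro h i hi
      have h2 := h (σ i) (hσlt i hi)
      try simp only [Set.mem_iInter, Finset.mem_filter] at h2
      exact h2 i ⟨hi, rfl⟩
  have hSval : ∀ i ∈ F, S (σ i) = B i := by
    intro i hi
    have hfilter : F.filter (fun j => σ j = σ i) = {i} := by
      ext j
      simp only [Finset.mem_filter, Finset.mem_singleton]
      constructor
      · rintro ⟨hj, hσj⟩; exact hσ hσj
      · rintro rfl; exact ⟨hi, rfl⟩
    show (⋂ j ∈ F.filter (fun j => σ j = σ i), B j) = B i
    rw [hfilter, Finset.set_biInter_singleton]
  have hSuniv : ∀ k ∈ Finset.range n, k ∉ F.image σ → q (S k) = 1 := by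
    intro k _ hk
    have : F.filter (fun i => σ i = k) = ∅ := by
      rw [Finset.filter_eq_empty_iff]
      intro i hi hσi
      exact hk (Finset.mem_image.2 ⟨i, hi, hσi⟩)
    have he : (⋂ i ∈ (∅ : Finset ℕ), B i) = (univ : Set Bool) := by
      ext b; simp
    show q (⋂ i ∈ F.filter (fun i => σ i = k), B i) = 1
    rw [this, he]
    exact q_univ
  rw [seteq, masterCyl n S]
  have hsub : F.image σ ⊆ Finset.range n := by
    intro k hk
    obtain ⟨i, hi, rfl⟩ := Finset.mem_image.1 hk
    exact Finset.mem_range.2 (hσlt i hi)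
  calc (∏ k ∈ Finset.range n, q (S k)) = ∏ k ∈ F.image σ, q (S k) :=
        (Finset.prod_subset hsub hSuniv).symm
    _ = ∏ i ∈ F, q (S (σ i)) := Finset.prod_image (fun i _ j _ h => hσ h)
    _ = ∏ i ∈ F, q (B i) := Finset.prod_congr rfl (fun i hi => congrArg q (hSval i hi))

lemma masterSingle (k : ℕ) (B : Set Bool) : mu0 (db k ⁻¹' B) = q B := by
  have h := masterFin id Function.injective_id {k} (fun _ => B)
  simpa using h

lemma q_true : q {true} = (4:ℝ≥0∞)⁻¹ := by
  classical
  rw [q, if_pos (mem_singleton _), if_neg (by simp)]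
  ring

/-- the real-valued digit indicator random variables along an injective subsequence
are pairwise independent, identically distributed, and satisfy the SLLN -/
lemma slln (σ : ℕ → ℕ) (hσ : Function.Injective σ) :
    ∀ᵐ u ∂mu0, Filter.Tendsto
      (fun n : ℕ => (∑ i ∈ Finset.range n, (if db (σ i) u = true then (1:ℝ) else 0)) / n)
      atTop (𝓝 (4:ℝ)⁻¹) := by
  classical
  set X : ℕ → ℝ → ℝ := fun i u => if db (σ i) u = true then (1:ℝ) else 0 with hX
  have hXcomp : ∀ i, X i = (fun b : Bool => if b = true then (1:ℝ) else 0) ∘ db (σ i) :=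
    fun i => rfl
  have hXmeas : ∀ i, Measurable (X i) := fun i => by
    rw [hXcomp]
    exact (measurable_from_top (f := fun b : Bool => if b = true then (1:ℝ) else 0)).comp
      (measurable_db (σ i))
  have hXpre : ∀ i (s : Set ℝ), X i ⁻¹' s
      = db (σ i) ⁻¹' ((fun b : Bool => if b = true then (1:ℝ) else 0) ⁻¹' s) := by
    intro i s; rw [hXcomp]; rfl
  have hint : Integrable (X 0) mu0 := by
    refine Integrable.mono' (integrable_const (1:ℝ)) ((hXmeas 0).aestronglyMeasurable) ?_
    filter_upwards with u
    simp only [hX]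
    split_ifs <;> simp
  have hindep : Pairwise (Function.onFun (ProbabilityTheory.IndepFun · · mu0) X) := by
    intro i j hij
    rw [Function.onFun, ProbabilityTheory.indepFun_iff_measure_inter_preimage_eq_mul]
    intro s t _ _
    rw [hXpre, hXpre]
    set Bs := (fun b : Bool => if b = true then (1:ℝ) else 0) ⁻¹' s
    set Bt := (fun b : Bool => if b = true then (1:ℝ) else 0) ⁻¹' t
    have h2 : db (σ i) ⁻¹' Bs ∩ db (σ j) ⁻¹' Bt
        = ⋂ k ∈ ({i, j} : Finset ℕ), db (σ k) ⁻¹' (if k = i then Bs else Bt) := by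
      ext u
      simp only [Set.mem_iInter, Finset.mem_insert, Finset.mem_singleton, mem_inter_iff,
        mem_preimage]
      constructor
      · rintro ⟨h1, h2⟩ k hk
        rcases hk with rfl | rfl
        · rw [if_pos rfl]; exact h1
        · rw [if_neg hij.symm]; exact h2
      · intro h
        constructor
        · have := h i (Or.inl rfl); rwa [if_pos rfl] at this
        · have := h j (Or.inr rfl); rwa [if_neg hij.symm] at this
    rw [h2, masterFin σ hσ {i, j} (fun k => if k = i then Bs else Bt),
      Finset.prod_pair hij, masterSingle, masterSingle, if_pos rfl, if_neg hij.symm]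
  have hident : ∀ i, ProbabilityTheory.IdentDistrib (X i) (X 0) mu0 mu0 := by
    intro i
    refine ⟨(hXmeas i).aemeasurable, (hXmeas 0).aemeasurable, ?_⟩
    apply Measure.ext
    intro s hs
    rw [Measure.map_apply (hXmeas i) hs, Measure.map_apply (hXmeas 0) hs, hXpre, hXpre,
      masterSingle, masterSingle]
  have hexp : (∫ u, X 0 u ∂mu0) = (4:ℝ)⁻¹ := by
    have h1 : X 0 = Set.indicator (db (σ 0) ⁻¹' {true}) (fun _ => (1:ℝ)) := by
      funext u
      rw [hX, Set.indicator_apply]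
      simp only [mem_preimage, mem_singleton_iff]
    rw [h1, integral_indicator_const (1:ℝ) ((measurable_db (σ 0)) (by trivial)),
      Measure.real, masterSingle, q_true]
    simp
  have h := ProbabilityTheory.strong_law_ae_real X hint hindep hident
  rwa [hexp] at h

/-! ### The coding map and the Cantor set -/

lemma summable_w : Summable (fun k : ℕ => (4:ℝ)⁻¹ ^ (k+1)) := by
  have h := (summable_geometric_of_lt_one (by norm_num : (0:ℝ) ≤ 4⁻¹)
    (by norm_num : (4:ℝ)⁻¹ < 1)).mul_left (4:ℝ)⁻¹
  refine h.congr fun k => ?_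
  rw [pow_succ']

lemma tsum_w : (∑' k : ℕ, (4:ℝ)⁻¹ ^ (k+1)) = 3⁻¹ := by
  have h1 : (∑' k : ℕ, (4:ℝ)⁻¹ ^ (k+1)) = ∑' k : ℕ, (4:ℝ)⁻¹ * 4⁻¹ ^ k := by
    refine tsum_congr fun k => ?_
    rw [pow_succ']
  rw [h1, tsum_mul_left, tsum_geometric_of_lt_one (by norm_num) (by norm_num)]
  norm_num

lemma summable_wt (c : ℕ → ℤ) (h0 : ∀ k, 0 ≤ c k) (h3 : ∀ k, c k ≤ 3) :
    Summable (fun k => (c k : ℝ) * (4:ℝ)⁻¹ ^ (k+1)) := by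
  refine Summable.of_nonneg_of_le (fun k => ?_) (fun k => ?_) (summable_w.mul_left 3)
  · have := h0 k
    positivity
  · have h1 : (c k : ℝ) ≤ 3 := by exact_mod_cast h3 k
    have h2 : (0:ℝ) ≤ (4:ℝ)⁻¹ ^ (k+1) := by positivity
    nlinarith

/-- digit extraction from a number whose base-4 digits are all ≤ 2 -/
lemma dg_tsum (c : ℕ → ℤ) (h0 : ∀ k, 0 ≤ c k) (h2 : ∀ k, c k ≤ 2) (k : ℕ) :
    dg k (∑' j, (c j : ℝ) * (4:ℝ)⁻¹ ^ (j+1)) = c k := by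
  have hsum : Summable (fun j => (c j : ℝ) * (4:ℝ)⁻¹ ^ (j+1)) :=
    summable_wt c h0 (fun j => le_trans (h2 j) (by norm_num))
  set x := ∑' j, (c j : ℝ) * (4:ℝ)⁻¹ ^ (j+1) with hx
  set N : ℤ := ∑ j ∈ Finset.range (k+1), c j * 4 ^ (k-j) with hN
  have htw : ∀ j, j ≤ k → (4:ℝ)⁻¹ ^ (j+1) * 4 ^ (k+1) = 4 ^ (k-j) := by
    intro j hj
    have h4 : (4:ℝ) ^ (k+1) = 4 ^ (j+1) * 4 ^ (k-j) := by
      rw [← pow_add]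
      congr 1
      omega
    rw [inv_pow, h4, ← mul_assoc, inv_mul_cancel₀ (by positivity : ((4:ℝ) ^ (j+1)) ≠ 0),
      one_mul]
  have hXsplit : x * 4 ^ (k+1)
      = (N:ℝ) + ∑' j, (c (j + (k+1)) : ℝ) * (4:ℝ)⁻¹ ^ (j+1) := by
    have e1 : x * 4 ^ (k+1) = ∑' j, (c j : ℝ) * (4:ℝ)⁻¹ ^ (j+1) * 4 ^ (k+1) := by
      rw [hx, tsum_mul_right]
    have e2 := Summable.sum_add_tsum_nat_add (k+1) (hsum.mul_right ((4:ℝ) ^ (k+1)))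
    rw [e1, ← e2]
    congr 1
    · rw [hN]
      push_cast
      refine Finset.sum_congr rfl fun j hj => ?_
      have hj' : j ≤ k := by
        have := Finset.mem_range.1 hj
        omega
      rw [mul_assoc, htw j hj']
    · refine tsum_congr fun j => ?_
      rw [mul_assoc]
      congr 1
      have : (4:ℝ)⁻¹ ^ (j + (k+1) + 1) = 4⁻¹ ^ (j+1) * 4⁻¹ ^ (k+1) := by
        rw [← pow_add]; congr 1; omega
      have h5 : (4:ℝ)⁻¹ ^ (k+1) * 4 ^ (k+1) = 1 := by
        rw [inv_pow]
        exact inv_mul_cancel₀ (by positivity)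
      rw [this, mul_assoc, h5, mul_one]
  set T := ∑' j, (c (j + (k+1)) : ℝ) * (4:ℝ)⁻¹ ^ (j+1) with hT
  have hT0 : 0 ≤ T := by
    refine tsum_nonneg fun j => ?_
    have := h0 (j + (k+1))
    positivity
  have hT1 : T < 1 := by
    have hb : T ≤ ∑' j : ℕ, 2 * (4:ℝ)⁻¹ ^ (j+1) := by
      refine Summable.tsum_le_tsum (fun j => ?_)
        (summable_wt (fun j => c (j + (k+1))) (fun j => h0 _) (fun j => le_trans (h2 _) (by norm_num)))
        (summable_w.mul_left 2)
      have h1 : (c (j + (k+1)) : ℝ) ≤ 2 := by exact_mod_cast h2 _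
      have hp : (0:ℝ) ≤ (4:ℝ)⁻¹ ^ (j+1) := by positivity
      nlinarith
    rw [tsum_mul_left, tsum_w] at hb
    norm_num at hb
    linarith
  have hfl : ⌊x * 4 ^ (k+1)⌋ = N := by
    rw [Int.floor_eq_iff, hXsplit]
    constructor
    · linarith
    · push_cast; linarith
  have hNmod : N % 4 = c k := by
    rw [hN, Finset.sum_range_succ]
    have hstep : (∑ j ∈ Finset.range k, c j * 4 ^ (k-j))
        = 4 * ∑ j ∈ Finset.range k, c j * 4 ^ (k-j-1) := by
      rw [Finset.mul_sum]
      refine Finset.sum_congr rfl fun j hj => ?_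
      have hj' : j < k := Finset.mem_range.1 hj
      have : (4:ℤ) ^ (k-j) = 4 * 4 ^ (k-j-1) := by
        rw [← pow_succ']
        congr 1
        omega
      rw [this]; ring
    rw [hstep]
    have hkk : (4:ℤ) ^ (k - k) = 1 := by rw [Nat.sub_self, pow_zero]
    rw [hkk, mul_one]
    have hck0 := h0 k
    have hck2 := h2 k
    generalize (∑ j ∈ Finset.range k, c j * 4 ^ (k-j-1)) = M
    omega
  show ⌊x * 4 ^ (k+1)⌋ % 4 = c k
  rw [hfl, hNmod]

/-- integer digit value of the coding -/
def idig (k : ℕ) (u : ℝ) : ℤ := if db k u = true then 1 else 0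

lemma idig_nonneg (k u) : 0 ≤ idig k u := by rw [idig]; split_ifs <;> norm_num

lemma idig_le_one (k u) : idig k u ≤ 1 := by rw [idig]; split_ifs <;> norm_num

lemma measurable_idig (k : ℕ) : Measurable (idig k) :=
  (measurable_from_top (f := fun b : Bool => if b = true then (1:ℤ) else 0)).comp
    (measurable_db k)

/-- the coding map -/
def G (u : ℝ) : ℝ := ∑' j, (idig j u : ℝ) * (4:ℝ)⁻¹ ^ (j+1)

lemma summable_G (u : ℝ) : Summable (fun j => (idig j u : ℝ) * (4:ℝ)⁻¹ ^ (j+1)) :=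
  summable_wt _ (fun k => idig_nonneg k u) (fun k => le_trans (idig_le_one k u) (by norm_num))

lemma dg_G (k : ℕ) (u : ℝ) : dg k (G u) = idig k u :=
  dg_tsum (fun j => idig j u) (fun j => idig_nonneg j u)
    (fun j => le_trans (idig_le_one j u) (by norm_num)) k

lemma G_nonneg (u : ℝ) : 0 ≤ G u := by
  refine tsum_nonneg fun j => ?_
  have := idig_nonneg j u
  positivity

lemma G_le (u : ℝ) : G u ≤ 1 := by
  have h : G u ≤ ∑' j : ℕ, (4:ℝ)⁻¹ ^ (j+1) := by
    refine Summable.tsum_le_tsum (fun j => ?_) (summable_G u) summable_w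
    have h1 : (idig j u : ℝ) ≤ 1 := by exact_mod_cast idig_le_one j u
    have hp : (0:ℝ) ≤ (4:ℝ)⁻¹ ^ (j+1) := by positivity
    nlinarith
  rw [tsum_w] at h
  linarith

lemma measurable_partial (f : ℕ → ℝ → ℤ) (hf : ∀ k, Measurable (f k)) (n : ℕ) :
    Measurable (fun u => ∑ j ∈ Finset.range n, (f j u : ℝ) * (4:ℝ)⁻¹ ^ (j+1)) := by
  refine Finset.measurable_sum _ fun j _ => ?_
  exact (((measurable_from_top (f := fun z : ℤ => (z:ℝ))).comp (hf j)).mul_const _)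

lemma measurable_tsum_digits (f : ℕ → ℝ → ℤ) (hf : ∀ k, Measurable (f k))
    (h0 : ∀ k u, 0 ≤ f k u) (h3 : ∀ k u, f k u ≤ 3) :
    Measurable (fun u => ∑' j, (f j u : ℝ) * (4:ℝ)⁻¹ ^ (j+1)) := by
  refine measurable_of_tendsto_metrizable (f := fun n u =>
    ∑ j ∈ Finset.range n, (f j u : ℝ) * (4:ℝ)⁻¹ ^ (j+1))
    (fun n => measurable_partial f hf n) ?_
  rw [tendsto_pi_nhds]
  intro u
  exact (summable_wt (fun k => f k u) (fun k => h0 k u) (fun k => h3 k u)).hasSum.tendsto_sum_nat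

lemma measurable_G : Measurable G :=
  measurable_tsum_digits idig measurable_idig (fun k u => idig_nonneg k u)
    (fun k u => le_trans (idig_le_one k u) (by norm_num))

/-- the digit resummation map -/
def dsum (x : ℝ) : ℝ := ∑' j, (dg j x : ℝ) * (4:ℝ)⁻¹ ^ (j+1)

lemma measurable_dsum : Measurable dsum :=
  measurable_tsum_digits dg measurable_dg (fun k u => dg_nonneg k u)
    (fun k u => by have := dg_lt k u; omega)

/-- the Cantor set of reals whose digits are 0/1 and which are determined by their digits -/
def Cset : Set ℝ := {x | (∀ k, dg k x ≤ 1) ∧ x = dsum x}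

lemma measurable_Cset : MeasurableSet Cset := by
  have h1 : Cset = (⋂ k, (dg k) ⁻¹' {z : ℤ | z ≤ 1}) ∩ ((fun x => x - dsum x) ⁻¹' {0}) := by
    ext x
    simp only [Cset, mem_setOf_eq, mem_inter_iff, Set.mem_iInter, mem_preimage,
      mem_singleton_iff, sub_eq_zero]
    all_goals constructor
    all_goals rintro ⟨h, h2⟩
    all_goals exact ⟨h, h2.symm⟩
  rw [h1]
  exact (MeasurableSet.iInter fun k => (measurable_dg k) (by trivial)).inter
    ((measurable_id.sub measurable_dsum) (measurableSet_singleton 0))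

lemma G_mem_Cset (u : ℝ) : G u ∈ Cset := by
  constructor
  · intro k; rw [dg_G]; exact idig_le_one k u
  · rw [dsum]
    refine Eq.symm (tsum_congr fun j => ?_)
    rw [dg_G]

lemma Cset_digit_ext {x y : ℝ} (hx : x ∈ Cset) (hy : y ∈ Cset)
    (h : ∀ k, dg k x = dg k y) : x = y := by
  rw [hx.2, hy.2, dsum, dsum]
  exact tsum_congr fun j => by rw [h j]

lemma summable_dg (x : ℝ) : Summable (fun j => (dg j x : ℝ) * (4:ℝ)⁻¹ ^ (j+1)) :=
  summable_wt _ (fun k => dg_nonneg k x) (fun k => by have := dg_lt k x; omega)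

lemma dg_add {x y : ℝ} (hx : x ∈ Cset) (hy : y ∈ Cset) (k : ℕ) :
    dg k (x + y) = dg k x + dg k y := by
  have hrep : x + y = ∑' j, ((dg j x + dg j y : ℤ) : ℝ) * (4:ℝ)⁻¹ ^ (j+1) := by
    conv_lhs => rw [hx.2, hy.2, dsum, dsum]
    rw [← Summable.tsum_add (summable_dg x) (summable_dg y)]
    refine tsum_congr fun j => ?_
    push_cast
    ring
  rw [hrep]
  exact dg_tsum _ (fun j => by have := dg_nonneg j x; have := dg_nonneg j y; omega)
    (fun j => by have := hx.1 j; have := hy.1 j; omega) k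

/-- separation: distinct digits force distance -/
lemma sep {x y : ℝ} (hx : x ∈ Cset) (hy : y ∈ Cset) {j : ℕ}
    (hagree : ∀ i, i < j → dg i x = dg i y) (hne : dg j x ≠ dg j y) :
    (4:ℝ)⁻¹ ^ (j+1) * (2/3) ≤ |x - y| := by
  set f : ℕ → ℝ := fun i => ((dg i x : ℝ) - dg i y) * (4:ℝ)⁻¹ ^ (i+1) with hf
  have hfs : Summable f := by
    refine ((summable_dg x).sub (summable_dg y)).congr fun i => ?_
    rw [hf]; ring
  have hxy : x - y = ∑' i, f i := by
    conv_lhs => rw [hx.2, hy.2, dsum, dsum]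
    rw [← Summable.tsum_sub (summable_dg x) (summable_dg y)]
    exact tsum_congr fun i => by rw [hf]; ring
  have hshift : Summable (fun i => f (i + j)) := (summable_nat_add_iff j).2 hfs
  have hhead : (∑ i ∈ Finset.range j, f i) = 0 := by
    refine Finset.sum_eq_zero fun i hi => ?_
    rw [hf]
    have := hagree i (Finset.mem_range.1 hi)
    simp [this]
  have hxy2 : x - y = ∑' i, f (i + j) := by
    rw [hxy, ← Summable.sum_add_tsum_nat_add j hfs, hhead, zero_add]
  have hxy3 : x - y = f j + ∑' i, f ((i + 1) + j) := by
    rw [hxy2, Summable.tsum_eq_zero_add hshift]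
    simp only [zero_add]
  set R := ∑' i, f ((i + 1) + j) with hR
  have hshift2 : Summable (fun i => f ((i + 1) + j)) := by
    refine ((summable_nat_add_iff (j+1)).2 hfs).congr fun i => ?_
    congr 1
    omega
  have habs : Summable (fun i => |f ((i + 1) + j)|) := hshift2.abs
  have hb : ∀ i : ℕ, |f ((i + 1) + j)| ≤ (4:ℝ)⁻¹ ^ (j+1) * 4⁻¹ ^ (i+1) := by
    intro i
    have hzb : |dg ((i+1)+j) x - dg ((i+1)+j) y| ≤ (1:ℤ) := by
      have a1 := dg_nonneg ((i+1)+j) x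
      have a2 := hx.1 ((i+1)+j)
      have a3 := dg_nonneg ((i+1)+j) y
      have a4 := hy.1 ((i+1)+j)
      rw [abs_le]
      omega
    have h1 : |(dg ((i+1)+j) x : ℝ) - dg ((i+1)+j) y| ≤ 1 := by exact_mod_cast hzb
    calc |f ((i+1)+j)| = |(dg ((i+1)+j) x : ℝ) - dg ((i+1)+j) y| * (4:ℝ)⁻¹ ^ ((i+1)+j+1) := by
          rw [hf]
          rw [abs_mul, abs_of_nonneg (by positivity : (0:ℝ) ≤ (4:ℝ)⁻¹ ^ ((i+1)+j+1))]
      _ ≤ 1 * (4:ℝ)⁻¹ ^ ((i+1)+j+1) :=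
          mul_le_mul_of_nonneg_right h1 (by positivity)
      _ = (4:ℝ)⁻¹ ^ (j+1) * 4⁻¹ ^ (i+1) := by
          rw [one_mul, ← pow_add]
          congr 1
          omega
  have htail : |R| ≤ (4:ℝ)⁻¹ ^ (j+1) * 3⁻¹ := by
    have h2 : |R| ≤ ∑' i, |f ((i + 1) + j)| := by
      have h3 := norm_tsum_le_tsum_norm (f := fun i => f ((i + 1) + j)) (by
        simpa only [Real.norm_eq_abs] using habs)
      simpa only [Real.norm_eq_abs, hR] using h3
    have h4 : (∑' i, |f ((i + 1) + j)|) ≤ ∑' i : ℕ, (4:ℝ)⁻¹ ^ (j+1) * 4⁻¹ ^ (i+1) :=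
      Summable.tsum_le_tsum hb habs (summable_w.mul_left _)
    rw [tsum_mul_left, tsum_w] at h4
    linarith
  have hfj : 1 * (4:ℝ)⁻¹ ^ (j+1) ≤ |f j| := by
    have hz : (1:ℤ) ≤ |dg j x - dg j y| := Int.one_le_abs (sub_ne_zero.2 hne)
    have hz2 : (1:ℝ) ≤ |(dg j x : ℝ) - dg j y| := by exact_mod_cast hz
    calc 1 * (4:ℝ)⁻¹ ^ (j+1) ≤ |(dg j x : ℝ) - dg j y| * (4:ℝ)⁻¹ ^ (j+1) :=
          mul_le_mul_of_nonneg_right hz2 (by positivity)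
      _ = |f j| := by
          rw [hf, abs_mul, abs_of_nonneg (by positivity : (0:ℝ) ≤ (4:ℝ)⁻¹ ^ (j+1))]
  have hfR : |f j| ≤ |f j + R| + |R| := by
    calc |f j| = |(f j + R) + (-R)| := by ring_nf
      _ ≤ |f j + R| + |(-R)| := abs_add_le _ _
      _ = |f j + R| + |R| := by rw [abs_neg]
  have hfinal : |x - y| = |f j + R| := by rw [hxy3, hR]
  rw [hfinal]
  linarith

/-! ### The measure lam -/

def lam : Measure ℝ := Measure.map G mu0

instance : IsProbabilityMeasure lam := Measure.isProbabilityMeasure_map measurable_G.aemeasurable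

lemma lam_apply {E : Set ℝ} (hE : MeasurableSet E) : lam E = mu0 (G ⁻¹' E) :=
  Measure.map_apply measurable_G hE

lemma lam_Cc : lam Csetᶜ = 0 := by
  rw [lam_apply measurable_Cset.compl]
  have h : G ⁻¹' Csetᶜ = ∅ := by
    ext u
    simp only [mem_preimage, mem_compl_iff, mem_empty_iff_false, iff_false, not_not]
    exact G_mem_Cset u
  rw [h]
  simp

lemma c34_lt_one : (3:ℝ≥0∞) * 4⁻¹ < 1 := by
  rw [show (1:ℝ≥0∞) = 4 * 4⁻¹ from (ENNReal.mul_inv_cancel (by norm_num) (by norm_num)).symm]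
  exact ENNReal.mul_lt_mul_left (by norm_num) (by norm_num) (by norm_num)

lemma cylinder_bound (n : ℕ) (t : ℕ → Bool) :
    mu0 {u | ∀ k < n, db k u = t k} ≤ ((3:ℝ≥0∞) * 4⁻¹) ^ n := by
  have h1 : {u : ℝ | ∀ k < n, db k u = t k} = {u | ∀ k < n, db k u ∈ ({t k} : Set Bool)} := by
    ext u
    simp only [mem_setOf_eq, mem_singleton_iff]
  rw [h1, masterCyl n (fun k => {t k})]
  calc (∏ k ∈ Finset.range n, q {t k}) ≤ ∏ _k ∈ Finset.range n, (3:ℝ≥0∞) * 4⁻¹ :=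
        Finset.prod_le_prod' fun k _ => q_singleton_le (t k)
    _ = ((3:ℝ≥0∞) * 4⁻¹) ^ n := by rw [Finset.prod_const, Finset.card_range]

lemma lam_singleton (x : ℝ) : lam {x} = 0 := by
  rw [lam_apply (measurableSet_singleton x)]
  rcases eq_empty_or_nonempty (G ⁻¹' {x}) with he | ⟨u0, hu0⟩
  · rw [he]; simp
  · simp only [mem_preimage, mem_singleton_iff] at hu0
    have hsub : ∀ n, G ⁻¹' {x} ⊆ {u | ∀ k < n, db k u = db k u0} := by
      intro n u hu
      simp only [mem_preimage, mem_singleton_iff] at hu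
      intro k _
      have h1 : idig k u = idig k u0 := by
        rw [← dg_G, ← dg_G, hu, hu0]
      rw [idig, idig] at h1
      cases h2 : db k u <;> cases h3 : db k u0 <;> rw [h2, h3] at h1 <;> simp_all
    have hb : ∀ n, mu0 (G ⁻¹' {x}) ≤ ((3:ℝ≥0∞) * 4⁻¹) ^ n :=
      fun n => le_trans (measure_mono (hsub n)) (cylinder_bound n _)
    have hlim : Filter.Tendsto (fun n => ((3:ℝ≥0∞) * 4⁻¹) ^ n) atTop (𝓝 0) :=
      ENNReal.tendsto_pow_atTop_nhds_zero_of_lt_one c34_lt_one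
    have := ge_of_tendsto hlim (Filter.Eventually.of_forall hb)
    exact le_antisymm this zero_le

instance : NullSingletonClass lam := ⟨lam_singleton⟩

/-- Frostman-type estimate -/
lemma frostman_n {n : ℕ} {s : Set ℝ}
    (hd : ∀ x ∈ s, ∀ y ∈ s, |x - y| < (4:ℝ)⁻¹ ^ n * (2/3)) :
    lam s ≤ ((3:ℝ≥0∞) * 4⁻¹) ^ n := by
  have hsplit : lam s ≤ lam (s ∩ Cset) + lam Csetᶜ := by
    calc lam s ≤ lam ((s ∩ Cset) ∪ Csetᶜ) := measure_mono (fun x hx => by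
          by_cases h : x ∈ Cset
          · exact Or.inl ⟨hx, h⟩
          · exact Or.inr h)
      _ ≤ lam (s ∩ Cset) + lam Csetᶜ := measure_union_le _ _
  rcases eq_empty_or_nonempty (s ∩ Cset) with he | ⟨x0, hx0s, hx0⟩
  · rw [he] at hsplit
    simp only [measure_empty, zero_add, lam_Cc] at hsplit
    exact le_trans hsplit zero_le
  · have hagree : ∀ y ∈ s ∩ Cset, ∀ j, j < n → dg j y = dg j x0 := by
      rintro y ⟨hys, hyC⟩ j
      induction j using Nat.strong_induction_on with
      | _ j ih =>
        intro hj
        by_contra hne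
        have hsep := sep hyC hx0 (fun i hi => ih i hi (lt_trans hi hj)) hne
        have hlt := hd y hys x0 hx0s
        have hpow : (4:ℝ)⁻¹ ^ n ≤ (4:ℝ)⁻¹ ^ (j+1) :=
          pow_le_pow_of_le_one (by norm_num) (by norm_num) (by omega)
        nlinarith
    set Z : Set ℝ := {y | ∀ k < n, db k (0:ℝ) = db k 0} with hZ
    have hcyl : lam (s ∩ Cset) ≤ ((3:ℝ≥0∞) * 4⁻¹) ^ n := by
      set t : ℕ → Bool := fun k => decide (dg k x0 = 1) with ht
      have hW : MeasurableSet {y : ℝ | y ∈ Cset ∧ ∀ k < n, dg k y = dg k x0} := by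
        have h2 : {y : ℝ | y ∈ Cset ∧ ∀ k < n, dg k y = dg k x0}
            = Cset ∩ ⋂ k ∈ Finset.range n, (dg k) ⁻¹' {dg k x0} := by
          ext y
          simp only [mem_setOf_eq, mem_inter_iff, Set.mem_iInter, Finset.mem_range,
            mem_preimage, mem_singleton_iff]
        rw [h2]
        exact measurable_Cset.inter (MeasurableSet.biInter (Finset.range n).countable_toSet
          (fun k _ => (measurable_dg k) (by trivial)))
      have hmono : s ∩ Cset ⊆ {y : ℝ | y ∈ Cset ∧ ∀ k < n, dg k y = dg k x0} :=
        fun y hy => ⟨hy.2, fun k hk => hagree y hy k hk⟩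
      have hGpre : G ⁻¹' {y : ℝ | y ∈ Cset ∧ ∀ k < n, dg k y = dg k x0}
          ⊆ {u | ∀ k < n, db k u = t k} := by
        intro u hu
        simp only [mem_preimage, mem_setOf_eq] at hu
        intro k hk
        have h1 : idig k u = dg k x0 := by rw [← dg_G]; exact hu.2 k hk
        have h2 : 0 ≤ dg k x0 := dg_nonneg k x0
        have h3 : dg k x0 ≤ 1 := hx0.1 k
        rw [idig] at h1
        rw [ht]
        cases h4 : db k u <;> rw [h4] at h1 <;> simp at h1 <;> simp [← h1]
      calc lam (s ∩ Cset) ≤ lam {y : ℝ | y ∈ Cset ∧ ∀ k < n, dg k y = dg k x0} :=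
            measure_mono hmono
        _ = mu0 (G ⁻¹' {y : ℝ | y ∈ Cset ∧ ∀ k < n, dg k y = dg k x0}) := lam_apply hW
        _ ≤ mu0 {u | ∀ k < n, db k u = t k} := measure_mono hGpre
        _ ≤ ((3:ℝ≥0∞) * 4⁻¹) ^ n := cylinder_bound n t
    rw [lam_Cc, add_zero] at hsplit
    exact le_trans hsplit hcyl

/-- mass distribution principle: lam is dominated by the 1/5-dimensional Hausdorff measure -/
lemma lam_le_haus : (6⁻¹ : ℝ≥0∞) • lam ≤ μH[((5:ℝ)⁻¹)] := by
  refine Measure.le_hausdorffMeasure _ _ (ENNReal.ofReal 8⁻¹) (by norm_num) ?_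
  intro s hs
  rcases eq_or_ne (EMetric.diam s) 0 with hD0 | hD0
  · have hsub : s.Subsingleton := EMetric.diam_eq_zero_iff.1 hD0
    rcases hsub.eq_empty_or_singleton with h | ⟨x, h⟩
    · rw [h]; simp
    · rw [h]
      simp only [Measure.smul_apply, smul_eq_mul]
      rw [lam_singleton x, mul_zero]
      exact zero_le
  · have hDtop : EMetric.diam s ≠ ⊤ :=
      ne_top_of_le_ne_top (by simp) hs
    set Dr := (EMetric.diam s).toReal with hDr
    have hDr0 : 0 < Dr := ENNReal.toReal_pos hD0 hDtop
    have hDr8 : Dr ≤ 8⁻¹ := ENNReal.toReal_le_of_le_ofReal (by norm_num) hs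
    have hdist : ∀ x ∈ s, ∀ y ∈ s, |x - y| ≤ Dr := by
      intro x hx y hy
      have h1 := EMetric.edist_le_diam_of_mem hx hy
      have h2 : dist x y ≤ Dr := by
        rw [dist_edist]
        exact ENNReal.toReal_mono hDtop h1
      rwa [Real.dist_eq] at h2
    have hex : ∃ m : ℕ, (4:ℝ)⁻¹ ^ (m+1) * (2/3) ≤ Dr := by
      obtain ⟨m, hm⟩ := exists_pow_lt_of_lt_one hDr0 (by norm_num : (4:ℝ)⁻¹ < 1)
      refine ⟨m, ?_⟩
      have h1 : (4:ℝ)⁻¹ ^ (m+1) ≤ 4⁻¹ ^ m :=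
        pow_le_pow_of_le_one (by norm_num) (by norm_num) (by omega)
      nlinarith [pow_nonneg (by norm_num : (0:ℝ) ≤ 4⁻¹) (m+1)]
    set n := Nat.find hex with hn
    have hspec : (4:ℝ)⁻¹ ^ (n+1) * (2/3) ≤ Dr := Nat.find_spec hex
    have hmin : Dr < (4:ℝ)⁻¹ ^ n * (2/3) := by
      match hn2 : n with
      | 0 =>
        simp only [pow_zero, one_mul]
        linarith
      | (m+1) =>
        have h2 := Nat.find_min hex (by omega : m < n)
        push_neg at h2
        exact h2
    have hlam : lam s ≤ ((3:ℝ≥0∞) * 4⁻¹) ^ n :=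
      frostman_n (fun x hx y hy => lt_of_le_of_lt (hdist x hx y hy) hmin)
    -- numeric comparison
    have hreal : (6⁻¹ : ℝ) * (3/4) ^ n ≤ ((4:ℝ)⁻¹ ^ (n+1) * (2/3)) ^ ((5:ℝ)⁻¹) := by
      have hx0 : (0:ℝ) ≤ 6⁻¹ * (3/4) ^ n := by positivity
      have ht0 : (0:ℝ) ≤ (4:ℝ)⁻¹ ^ (n+1) * (2/3) := by positivity
      have h5 : ((6⁻¹ : ℝ) * (3/4) ^ n) ^ (5:ℕ) ≤ (4:ℝ)⁻¹ ^ (n+1) * (2/3) := by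
        have e1 : ((6⁻¹ : ℝ) * (3/4) ^ n) ^ (5:ℕ) = 6⁻¹ ^ (5:ℕ) * (((3:ℝ)/4) ^ (5:ℕ)) ^ n := by
          rw [mul_pow, pow_right_comm]
        have e2 : (4:ℝ)⁻¹ ^ (n+1) * (2/3) = 6⁻¹ * ((4:ℝ)⁻¹) ^ n := by
          rw [pow_succ']
          ring
        rw [e1, e2]
        have h6 : ((3:ℝ)/4) ^ (5:ℕ) ≤ (4:ℝ)⁻¹ := by norm_num
        have h7 : ((((3:ℝ)/4) ^ (5:ℕ)) ^ n) ≤ ((4:ℝ)⁻¹) ^ n :=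
          pow_le_pow_left₀ (by positivity) h6 n
        have h8 : (6⁻¹ : ℝ) ^ (5:ℕ) ≤ 6⁻¹ := by norm_num
        exact mul_le_mul h8 h7 (by positivity) (by norm_num)
      calc (6⁻¹ : ℝ) * (3/4) ^ n
          = (((6⁻¹ : ℝ) * (3/4) ^ n) ^ (5:ℕ)) ^ ((5:ℝ)⁻¹) := by
            rw [← Real.rpow_natCast ((6⁻¹ : ℝ) * (3/4) ^ n) 5, ← Real.rpow_mul hx0]
            norm_num
        _ ≤ ((4:ℝ)⁻¹ ^ (n+1) * (2/3)) ^ ((5:ℝ)⁻¹) :=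
            Real.rpow_le_rpow (by positivity) h5 (by norm_num)
    -- transfer to ENNReal
    have hc34 : ((3:ℝ≥0∞) * 4⁻¹) = ENNReal.ofReal (3/4) := by
      rw [ENNReal.ofReal_div_of_pos (by norm_num)]
      rw [ENNReal.div_eq_inv_mul]
      norm_num [mul_comm]
    have h6inv : (6⁻¹ : ℝ≥0∞) = ENNReal.ofReal 6⁻¹ := by
      rw [ENNReal.ofReal_inv_of_pos (by norm_num)]
      norm_num
    have hLHS : (6⁻¹ : ℝ≥0∞) * lam s ≤ ENNReal.ofReal (6⁻¹ * (3/4) ^ n) := by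
      rw [ENNReal.ofReal_mul (by norm_num), ← h6inv, ENNReal.ofReal_pow (by norm_num), ← hc34]
      exact mul_le_mul_right hlam _
    have hRHS : ENNReal.ofReal (((4:ℝ)⁻¹ ^ (n+1) * (2/3)) ^ ((5:ℝ)⁻¹))
        ≤ EMetric.diam s ^ ((5:ℝ)⁻¹) := by
      have hD : ENNReal.ofReal ((4:ℝ)⁻¹ ^ (n+1) * (2/3)) ≤ EMetric.diam s := by
        rw [← ENNReal.ofReal_toReal hDtop]
        exact ENNReal.ofReal_le_ofReal hspec
      calc ENNReal.ofReal (((4:ℝ)⁻¹ ^ (n+1) * (2/3)) ^ ((5:ℝ)⁻¹))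
          = (ENNReal.ofReal ((4:ℝ)⁻¹ ^ (n+1) * (2/3))) ^ ((5:ℝ)⁻¹) :=
            (ENNReal.ofReal_rpow_of_pos (by positivity)).symm
        _ ≤ EMetric.diam s ^ ((5:ℝ)⁻¹) := ENNReal.rpow_le_rpow hD (by norm_num)
    calc ((6⁻¹ : ℝ≥0∞) • lam) s = 6⁻¹ * lam s := rfl
      _ ≤ ENNReal.ofReal (6⁻¹ * (3/4) ^ n) := hLHS
      _ ≤ ENNReal.ofReal (((4:ℝ)⁻¹ ^ (n+1) * (2/3)) ^ ((5:ℝ)⁻¹)) :=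
          ENNReal.ofReal_le_ofReal hreal
      _ ≤ EMetric.diam s ^ ((5:ℝ)⁻¹) := hRHS

/-! ### The full-measure injectivity sets -/

def Smp (m : ℝ) : ℕ → Prop := fun k => dg k m = 1

open Classical in
def Ym (m : ℝ) : Set ℝ :=
  if (setOf (Smp m)).Infinite then
    Cset ∩ {x | Filter.Tendsto (fun n : ℕ =>
      (∑ i ∈ Finset.range n, ((dg (Nat.nth (Smp m) i) x : ℝ))) / n) atTop (𝓝 (4:ℝ)⁻¹)}
  else Cset \ {x | m - x ∈ Cset}

lemma measurable_avg (m : ℝ) (n : ℕ) :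
    Measurable (fun x : ℝ => (∑ i ∈ Finset.range n, ((dg (Nat.nth (Smp m) i) x : ℝ))) / n) := by
  refine Measurable.div_const ?_ _
  refine Finset.measurable_sum _ fun i _ => ?_
  exact (measurable_from_top (f := fun z : ℤ => (z:ℝ))).comp (measurable_dg _)

lemma measurable_tendsto_set (m : ℝ) :
    MeasurableSet {x : ℝ | Filter.Tendsto (fun n : ℕ =>
      (∑ i ∈ Finset.range n, ((dg (Nat.nth (Smp m) i) x : ℝ))) / n) atTop (𝓝 (4:ℝ)⁻¹)} :=
  measurableSet_tendsto _ (measurable_avg m)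

lemma Ym_measurable (m : ℝ) : MeasurableSet (Ym m) := by
  rw [Ym]
  split_ifs with h
  · exact measurable_Cset.inter (measurable_tendsto_set m)
  · exact measurable_Cset.diff
      ((measurable_const.sub measurable_id) measurable_Cset)

lemma Ym_compl_null (m : ℝ) : lam (Ym m)ᶜ = 0 := by
  rw [Ym]
  split_ifs with h
  · -- infinite case : SLLN
    have hσ : Function.Injective (Nat.nth (Smp m)) := (Nat.nth_strictMono h).injective
    set T := {x : ℝ | Filter.Tendsto (fun n : ℕ =>
      (∑ i ∈ Finset.range n, ((dg (Nat.nth (Smp m) i) x : ℝ))) / n) atTop (𝓝 (4:ℝ)⁻¹)}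
      with hT
    have hTc : lam Tᶜ = 0 := by
      rw [lam_apply (measurable_tendsto_set m).compl]
      have hae := slln (Nat.nth (Smp m)) hσ
      rw [ae_iff] at hae
      refine measure_mono_null ?_ hae
      intro u hu
      simp only [mem_preimage, mem_compl_iff, hT, mem_setOf_eq] at hu ⊢
      intro hP
      apply hu
      refine hP.congr fun n => ?_
      congr 1
      refine Finset.sum_congr rfl fun i _ => ?_
      rw [dg_G, idig]
      split_ifs <;> norm_num
    rw [Set.compl_inter]
    exact measure_union_null lam_Cc hTc
  · -- finite case
    have hfin : (setOf (Smp m)).Finite := Set.not_infinite.1 h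
    set D := {x : ℝ | m - x ∈ Cset} with hD
    set Bad := D ∩ Cset with hBad
    have hBadfin : Bad.Finite := by
      rcases eq_empty_or_nonempty Bad with he | ⟨x0, hx0⟩
      · rw [he]; exact finite_empty
      · obtain ⟨N0, hN0⟩ := hfin.bddAbove
        have key : ∀ x ∈ Bad, ∀ k, N0 < k → dg k x * 2 = dg k m := by
          rintro x ⟨hxD, hxC⟩ k hk
          have hm : m = x + (m - x) := by ring
          have h1 : dg k m = dg k x + dg k (m - x) := by
            conv_lhs => rw [hm]
            exact dg_add hxC hxD k
          have h2 : dg k m ≠ 1 := by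
            intro hc
            exact absurd (hN0 (hc : Smp m k)) (by omega)
          have a1 := dg_nonneg k x
          have a2 := hxC.1 k
          have a3 := dg_nonneg k (m - x)
          have a4 := (hxD : m - x ∈ Cset).1 k
          omega
        have hinj : Set.InjOn (fun x => fun i : Fin (N0+1) => dg i x) Bad := by
          intro x hxB x' hx'B heq
          refine Cset_digit_ext hxB.2 hx'B.2 fun k => ?_
          rcases le_or_gt k N0 with hkN | hkN
          · have := congrFun heq ⟨k, by omega⟩
            simpa using this
          · have e1 := key x hxB k hkN
            have e2 := key x' hx'B k hkN
            omega
        have himg : ((fun x => fun i : Fin (N0+1) => dg i x) '' Bad).Finite := by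
          refine Set.Finite.subset (Set.Finite.pi (fun _ : Fin (N0+1) =>
            Set.finite_Icc (0:ℤ) 3)) ?_
          rintro f ⟨x, _, rfl⟩
          intro i _
          show dg (i:ℕ) x ∈ Icc (0:ℤ) 3
          exact ⟨dg_nonneg i x, by have := dg_lt (i:ℕ) x; omega⟩
        exact Set.Finite.of_finite_image himg hinj
    have hBadnull : lam Bad = 0 := hBadfin.countable.measure_zero lam
    have hsub : (Cset \ D)ᶜ ⊆ Csetᶜ ∪ Bad := by
      intro x hx
      rw [Set.mem_compl_iff, Set.mem_diff] at hx
      push_neg at hx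
      by_cases hC : x ∈ Cset
      · exact Or.inr ⟨hx hC, hC⟩
      · exact Or.inl hC
    exact measure_mono_null hsub (measure_union_null lam_Cc hBadnull)

lemma Ym_add {m : ℝ} : ∀ x ∈ Ym m, ∀ y ∈ Ym m, x + y = m → x = y := by
  intro x hx y hy hxy
  rw [Ym] at hx hy
  split_ifs at hx hy with h
  · -- infinite case
    obtain ⟨hxC, hxT⟩ := hx
    obtain ⟨hyC, hyT⟩ := hy
    exfalso
    have hdm : ∀ k, dg k m = dg k x + dg k y := by
      intro k
      rw [← hxy]
      exact dg_add hxC hyC k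
    have hSm : ∀ i : ℕ, dg (Nat.nth (Smp m) i) m = 1 :=
      fun i => Nat.nth_mem_of_infinite h i
    have hyx : ∀ i : ℕ, (dg (Nat.nth (Smp m) i) y : ℝ) = 1 - dg (Nat.nth (Smp m) i) x := by
      intro i
      have h1 := hdm (Nat.nth (Smp m) i)
      have h2 := hSm i
      have h3 : dg (Nat.nth (Smp m) i) y = 1 - dg (Nat.nth (Smp m) i) x := by omega
      rw [h3]
      push_cast
      ring
    have hT2 : Filter.Tendsto (fun n : ℕ =>
        (∑ i ∈ Finset.range n, ((dg (Nat.nth (Smp m) i) y : ℝ))) / n) atTop (𝓝 (3/4)) := by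
      have hcong : ∀ᶠ n : ℕ in atTop,
          1 - (∑ i ∈ Finset.range n, ((dg (Nat.nth (Smp m) i) x : ℝ))) / n
          = (∑ i ∈ Finset.range n, ((dg (Nat.nth (Smp m) i) y : ℝ))) / n := by
        filter_upwards [eventually_ge_atTop 1] with n hn
        have hne : (n:ℝ) ≠ 0 := by
          have : (1:ℕ) ≤ n := hn
          positivity
        rw [Finset.sum_congr rfl (fun i _ => hyx i), Finset.sum_sub_distrib,
          Finset.sum_const, Finset.card_range, sub_div, nsmul_eq_mul, mul_one,
          div_self hne]
      have h3 : Filter.Tendsto (fun n : ℕ =>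
          1 - (∑ i ∈ Finset.range n, ((dg (Nat.nth (Smp m) i) x : ℝ))) / n) atTop
          (𝓝 (1 - 4⁻¹)) := tendsto_const_nhds.sub hxT
      have h4 := h3.congr' hcong
      rw [show (1:ℝ) - 4⁻¹ = 3/4 by norm_num] at h4
      exact h4
    have := tendsto_nhds_unique hyT hT2
    norm_num at this
  · -- finite case
    exfalso
    have hyCm : y ∈ Cset := hy.1
    have : m - x ∈ Cset := by
      rw [show m - x = y by linarith]
      exact hyCm
    exact hx.2 this

/-! ### Assembly in the plane -/

def fpar (t : ℝ) : EuclideanSpace ℝ (Fin 2) :=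
  (WithLp.equiv 2 (Fin 2 → ℝ)).symm (fun i => if i = 0 then t else t^2)

lemma fpar_zero (t : ℝ) : fpar t 0 = t := by
  rw [fpar]
  norm_num

lemma fpar_one (t : ℝ) : fpar t 1 = t^2 := by
  rw [fpar]
  norm_num

lemma continuous_fpar : Continuous fpar := by
  apply (PiLp.continuous_toLp 2 (fun _ : Fin 2 => ℝ)).comp
  apply continuous_pi
  intro i
  by_cases h : i = 0
  · simp only [h, if_pos]
    exact continuous_id
  · simp only [if_neg h]
    exact continuous_pow 2

def Par : Set (EuclideanSpace ℝ (Fin 2)) := {x | x 1 = (x 0)^2}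

lemma proj_cont (i : Fin 2) : Continuous (fun x : EuclideanSpace ℝ (Fin 2) => x i) :=
  (EuclideanSpace.proj i).continuous

lemma measurable_Par : MeasurableSet Par := by
  have h : Par = (fun x : EuclideanSpace ℝ (Fin 2) => x 1 - (x 0)^2) ⁻¹' {0} := by
    ext x
    simp only [Par, mem_setOf_eq, mem_preimage, mem_singleton_iff, sub_eq_zero]
  rw [h]
  exact (((proj_cont 1).sub ((proj_cont 0).pow 2)).measurable) (measurableSet_singleton 0)

lemma fpar_mem_Par (t : ℝ) : fpar t ∈ Par := by
  simp only [Par, mem_setOf_eq, fpar_zero, fpar_one]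

lemma Par_eq {x : EuclideanSpace ℝ (Fin 2)} (hx : x ∈ Par) : x = fpar (x 0) := by
  ext i
  fin_cases i
  · show x 0 = fpar (x 0) 0
    rw [fpar_zero]
  · show x 1 = fpar (x 0) 1
    rw [fpar_one]
    exact hx

def mu2 : Measure (EuclideanSpace ℝ (Fin 2)) := Measure.map fpar lam

instance : IsProbabilityMeasure mu2 :=
  Measure.isProbabilityMeasure_map continuous_fpar.measurable.aemeasurable

lemma mu2_apply {E : Set (EuclideanSpace ℝ (Fin 2))} (hE : MeasurableSet E) :
    mu2 E = lam (fpar ⁻¹' E) :=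
  Measure.map_apply continuous_fpar.measurable hE

lemma mu2_Parc : mu2 Parᶜ = 0 := by
  rw [mu2_apply measurable_Par.compl]
  have h : fpar ⁻¹' Parᶜ = ∅ := by
    ext t
    simp only [mem_preimage, mem_compl_iff, mem_empty_iff_false, iff_false, not_not]
    exact fpar_mem_Par t
  rw [h]
  simp

lemma lam_Icc_compl : lam (Icc (0:ℝ) 1)ᶜ = 0 := by
  rw [lam_apply measurableSet_Icc.compl]
  have h : G ⁻¹' (Icc (0:ℝ) 1)ᶜ = ∅ := by
    ext u
    simp only [mem_preimage, mem_compl_iff, mem_empty_iff_false, iff_false, not_not, mem_Icc]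
    exact ⟨G_nonneg u, G_le u⟩
  rw [h]
  simp

lemma inner_formula (v z : EuclideanSpace ℝ (Fin 2)) :
    (inner ℝ v z : ℝ) = v 0 * z 0 + v 1 * z 1 := by
  simp [PiLp.inner_apply, RCLike.inner_apply, starRingEnd_apply, Fin.sum_univ_two]
  ring

lemma proj_eq_iff (V : Submodule ℝ (EuclideanSpace ℝ (Fin 2)))
    (v : EuclideanSpace ℝ (Fin 2)) (hV : V = Submodule.span ℝ {v})
    (x y : EuclideanSpace ℝ (Fin 2)) :
    Submodule.orthogonalProjectionOnto V x = Submodule.orthogonalProjectionOnto V y ↔ (inner ℝ v (x - y) : ℝ) = 0 := by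
  rw [← sub_eq_zero, ← map_sub, Submodule.orthogonalProjectionOnto_eq_zero_iff]
  subst hV
  exact Submodule.mem_orthogonal_singleton_iff_inner_right

lemma exists_span (V : Submodule ℝ (EuclideanSpace ℝ (Fin 2)))
    (hV : Module.finrank ℝ V = 1) :
    ∃ v : EuclideanSpace ℝ (Fin 2), v ≠ 0 ∧ V = Submodule.span ℝ {v} := by
  rw [finrank_eq_one_iff'] at hV
  obtain ⟨v, hv0, hspan⟩ := hV
  refine ⟨(v : EuclideanSpace ℝ (Fin 2)), fun hc => hv0 (Subtype.ext hc), ?_⟩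
  apply le_antisymm
  · intro x hx
    obtain ⟨c, hc⟩ := hspan ⟨x, hx⟩
    have h2 : c • (v : EuclideanSpace ℝ (Fin 2)) = x := congrArg Subtype.val hc
    exact Submodule.mem_span_singleton.2 ⟨c, h2⟩
  · rw [Submodule.span_singleton_le_iff_mem]
    exact v.2

lemma coord_ne {v : EuclideanSpace ℝ (Fin 2)} (hv : v ≠ 0) : v 0 ≠ 0 ∨ v 1 ≠ 0 := by
  by_contra h
  push_neg at h
  apply hv
  ext i
  fin_cases i
  · exact h.1
  · exact h.2

end ASInj
end

/-- The (upper) Hausdorff dimension of a measure: the infimum of the Hausdorff dimensions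
of Borel sets of full measure. -/
noncomputable def dimHMeasure {N : ℕ} (μ : Measure (EuclideanSpace ℝ (Fin N))) : ℝ≥0∞ :=
  ⨅ (X : Set (EuclideanSpace ℝ (Fin N))) (_ : MeasurableSet X) (_ : μ Xᶜ = 0), dimH X

/-- Theorem 1.4: there exists a compactly supported Borel probability
measure `μ` on `ℝ²` of positive Hausdorff dimension such that for every line `V ⊆ ℝ²`
through the origin, the orthogonal projection `P_V` is injective on some Borel set of
full `μ`-measure. -/
theorem exists_measure_all_projections_as_injective :
    ∃ μ : Measure (EuclideanSpace ℝ (Fin 2)), IsProbabilityMeasure μ ∧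
      (∃ K : Set (EuclideanSpace ℝ (Fin 2)), IsCompact K ∧ μ Kᶜ = 0) ∧
      0 < dimHMeasure μ ∧
      ∀ V : Submodule ℝ (EuclideanSpace ℝ (Fin 2)), Module.finrank ℝ V = 1 →
        ∃ Y : Set (EuclideanSpace ℝ (Fin 2)), MeasurableSet Y ∧ μ Yᶜ = 0 ∧
          Set.InjOn (fun x => (Submodule.orthogonalProjectionOnto V x : V)) Y := by
  classical
  refine ⟨ASInj.mu2, inferInstance,
    ⟨ASInj.fpar '' Icc 0 1, isCompact_Icc.image ASInj.continuous_fpar, ?_⟩, ?_, ?_⟩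
  · -- compact support
    have hK : MeasurableSet ((ASInj.fpar '' Icc 0 1)ᶜ) :=
      ((isCompact_Icc.image ASInj.continuous_fpar).isClosed.measurableSet).compl
    rw [ASInj.mu2_apply hK]
    refine measure_mono_null ?_ ASInj.lam_Icc_compl
    intro t ht
    simp only [mem_preimage, mem_compl_iff] at ht ⊢
    exact fun hmem => ht (Set.mem_image_of_mem _ hmem)
  · -- positive dimension
    have hdim : ((((5:ℝ≥0)⁻¹ : ℝ≥0) : ℝ≥0∞)) ≤ dimHMeasure ASInj.mu2 := by
      rw [dimHMeasure]
      refine le_iInf fun X => le_iInf fun hX => le_iInf fun hX0 => ?_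
      set B := ASInj.fpar ⁻¹' X with hB
      have hBc : ASInj.lam Bᶜ = 0 := by
        rw [hB, ← Set.preimage_compl, ← ASInj.mu2_apply hX.compl]
        exact hX0
      have hB1 : ASInj.lam B = 1 := by
        have h1 : (1:ℝ≥0∞) = ASInj.lam Set.univ := measure_univ.symm
        have h2 : ASInj.lam Set.univ ≤ ASInj.lam B + ASInj.lam Bᶜ := by
          rw [← Set.union_compl_self B]
          exact measure_union_le _ _
        rw [hBc, add_zero] at h2
        exact le_antisymm prob_le_one (h1 ▸ h2)
      have hne : μH[(((5:ℝ≥0)⁻¹ : ℝ≥0) : ℝ)] B ≠ 0 := by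
        have h3 : (((5:ℝ≥0)⁻¹ : ℝ≥0) : ℝ) = (5:ℝ)⁻¹ := by
          rw [NNReal.coe_inv]
          norm_num
        rw [h3]
        have h4 := MeasureTheory.Measure.le_iff'.1 ASInj.lam_le_haus B
        intro hzero
        rw [hzero] at h4
        rw [Measure.smul_apply, smul_eq_mul, hB1, mul_one] at h4
        exact absurd (le_antisymm h4 zero_le) (by norm_num)
      have hdB := le_dimH_of_hausdorffMeasure_ne_zero hne
      calc ((((5:ℝ≥0)⁻¹ : ℝ≥0) : ℝ≥0∞)) ≤ dimH B := hdB
        _ = dimH ((fun x : EuclideanSpace ℝ (Fin 2) => x 0) '' (ASInj.fpar '' B)) := by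
            rw [Set.image_image]
            have h7 : (fun t : ℝ => ASInj.fpar t 0) = fun t : ℝ => t :=
              funext ASInj.fpar_zero
            rw [h7, Set.image_id']
        _ ≤ dimH (ASInj.fpar '' B) := by
            have h9 := (EuclideanSpace.proj (0 : Fin 2) :
              EuclideanSpace ℝ (Fin 2) →L[ℝ] ℝ).lipschitz
            have h10 : LipschitzWith ‖(EuclideanSpace.proj (0 : Fin 2) :
                EuclideanSpace ℝ (Fin 2) →L[ℝ] ℝ)‖₊
                (fun x : EuclideanSpace ℝ (Fin 2) => x 0) := h9
            exact h10.dimH_image_le _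
        _ ≤ dimH X := dimH_mono (Set.image_preimage_subset _ _)
    exact lt_of_lt_of_le (ENNReal.coe_pos.2 (by norm_num)) hdim
  · -- projections
    intro V hV
    obtain ⟨v, hv0, hVspan⟩ := ASInj.exists_span V hV
    by_cases hv1 : v 1 = 0
    · refine ⟨ASInj.Par, ASInj.measurable_Par, ASInj.mu2_Parc, ?_⟩
      intro x hx y hy heq
      have heq2 : (inner ℝ v (x - y) : ℝ) = 0 := (ASInj.proj_eq_iff V v hVspan x y).1 heq
      rw [ASInj.inner_formula, PiLp.sub_apply, PiLp.sub_apply, hv1] at heq2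
      have hv00 : v 0 ≠ 0 := by
        rcases ASInj.coord_ne hv0 with h | h
        · exact h
        · exact absurd hv1 h
      have h00 : x 0 = y 0 := by
        have h5 : v 0 * (x 0 - y 0) = 0 := by linear_combination heq2
        rcases mul_eq_zero.1 h5 with h | h
        · exact absurd h hv00
        · linarith
      rw [ASInj.Par_eq hx, ASInj.Par_eq hy, h00]
    · set m := -(v 0)/(v 1) with hm
      refine ⟨ASInj.Par ∩ {x | x 0 ∈ ASInj.Ym m},
        ASInj.measurable_Par.inter
          ((ASInj.proj_cont 0).measurable (ASInj.Ym_measurable m)), ?_, ?_⟩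
      · rw [Set.compl_inter]
        refine measure_union_null ASInj.mu2_Parc ?_
        have hmeas : MeasurableSet ({x : EuclideanSpace ℝ (Fin 2) | x 0 ∈ ASInj.Ym m}ᶜ) :=
          ((ASInj.proj_cont 0).measurable (ASInj.Ym_measurable m)).compl
        rw [ASInj.mu2_apply hmeas]
        refine measure_mono_null ?_ (ASInj.Ym_compl_null m)
        intro t ht
        simp only [mem_preimage, mem_compl_iff, mem_setOf_eq, ASInj.fpar_zero] at ht ⊢
        exact ht
      · rintro x ⟨hxP, hxY⟩ y ⟨hyP, hyY⟩ heq
        have heq2 : (inner ℝ v (x - y) : ℝ) = 0 := (ASInj.proj_eq_iff V v hVspan x y).1 heq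
        rw [ASInj.inner_formula, PiLp.sub_apply, PiLp.sub_apply] at heq2
        rw [(hxP : x 1 = (x 0)^2), (hyP : y 1 = (y 0)^2)] at heq2
        rcases eq_or_ne (x 0) (y 0) with h00 | h00
        · rw [ASInj.Par_eq hxP, ASInj.Par_eq hyP, h00]
        · exfalso
          have hfac : (x 0 - y 0) * (v 0 + v 1 * (x 0 + y 0)) = 0 := by
            linear_combination heq2
          have h6 := (mul_eq_zero.1 hfac).resolve_left (sub_ne_zero.2 h00)
          have hst : x 0 + y 0 = m := by
            rw [hm]
            field_simp
            linear_combination h6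
          have h8 := ASInj.Ym_add (x 0) hxY (y 0) hyY hst
          exact h00 h8
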